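/- Every integer solution (x, y, z) with xyz ≠ 0 of the equation 1/x + 1/y + 1/z = 0 can be written as x = d·s·t, y = d·r·t, z = d·r·s for some nonzero integers d, r, s, t with r + s + t = 0. -/

import Mathlib

theorem stmt_14 (x y z : ℤ) (hx : x ≠ 0) (hy : y ≠ 0) (hz : z ≠ 0)
    (h : (x : ℚ)⁻¹ + (y : ℚ)⁻¹ + (z : ℚ)⁻¹ = 0) :
    ∃ d r s t : ℤ, d ≠ 0 ∧ r ≠ 0 ∧ s ≠ 0 ∧ t ≠ 0 ∧ r + s + t = 0 ∧
      x = d * s * t ∧ y = d * r * t ∧ z = d * r * s := by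
  have hx' : (x : ℚ) ≠ 0 := Int.cast_ne_zero.mpr hx
  have hy' : (y : ℚ) ≠ 0 := Int.cast_ne_zero.mpr hy
  have hz' : (z : ℚ) ≠ 0 := Int.cast_ne_zero.mpr hz
  have e : x * y + y * z + z * x = 0 := by
    have hq : (x : ℚ) * y + y * z + z * x = 0 := by
      field_simp at h
      linarith [h]
    exact_mod_cast hq
  set A : ℤ := y * z with hA
  set B : ℤ := x * z with hB
  set C : ℤ := x * y with hC
  have hAne : A ≠ 0 := mul_ne_zero hy hz
  have hBne : B ≠ 0 := mul_ne_zero hx hz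
  have hCne : C ≠ 0 := mul_ne_zero hx hy
  set g : ℤ := (Int.gcd B C : ℤ) with hg
  set k : ℤ := (Int.gcd A g : ℤ) with hk
  have hkA : k ∣ A := Int.gcd_dvd_left A g
  have hkg : k ∣ g := Int.gcd_dvd_right A g
  have hkB : k ∣ B := hkg.trans (Int.gcd_dvd_left B C)
  have hkC : k ∣ C := hkg.trans (Int.gcd_dvd_right B C)
  have hkne : k ≠ 0 := by
    intro h0
    exact hAne (by simpa [h0] using hkA)
  -- Bezout: k is an integer combination of A, B, C
  have bez1 : (g : ℤ) = B * Int.gcdA B C + C * Int.gcdB B C := Int.gcd_eq_gcd_ab B C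
  have bez2 : (k : ℤ) = A * Int.gcdA A g + g * Int.gcdB A g := Int.gcd_eq_gcd_ab A g
  obtain ⟨p, q, w, hbez⟩ : ∃ p q w : ℤ, k = A * p + B * q + C * w := by
    refine ⟨Int.gcdA A g, Int.gcdA B C * Int.gcdB A g, Int.gcdB B C * Int.gcdB A g, ?_⟩
    rw [bez2, bez1]; ring
  -- xyz divides all pairwise products of A, B, C
  have hAA : A * A = (x * y * z) * (-(y + z)) := by rw [hA]; linear_combination (y * z) * e
  have hBB : B * B = (x * y * z) * (-(x + z)) := by rw [hB]; linear_combination (x * z) * e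
  have hCC : C * C = (x * y * z) * (-(x + y)) := by rw [hC]; linear_combination (x * y) * e
  have hAB : A * B = (x * y * z) * z := by rw [hA, hB]; ring
  have hAC : A * C = (x * y * z) * y := by rw [hA, hC]; ring
  have hBC : B * C = (x * y * z) * x := by rw [hB, hC]; ring
  have hdvd : (x * y * z) ∣ k * k := by
    refine ⟨(-(y + z)) * (p * p) + (-(x + z)) * (q * q) + (-(x + y)) * (w * w)
      + z * (2 * p * q) + y * (2 * p * w) + x * (2 * q * w), ?_⟩
    calc k * k = (A * A) * (p * p) + (B * B) * (q * q) + (C * C) * (w * w)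
        + (A * B) * (2 * p * q) + (A * C) * (2 * p * w) + (B * C) * (2 * q * w) := by
          rw [hbez]; ring
      _ = _ := by rw [hAA, hBB, hCC, hAB, hAC, hBC]; ring
  obtain ⟨d, hd⟩ := hdvd
  obtain ⟨r, hr⟩ := hkA
  obtain ⟨s, hs⟩ := hkB
  obtain ⟨t, ht⟩ := hkC
  have hxyz : x * y * z ≠ 0 := mul_ne_zero (mul_ne_zero hx hy) hz
  have hdne : d ≠ 0 := by
    intro h0
    rw [h0, mul_zero] at hd
    exact hkne (mul_self_eq_zero.mp hd)
  have hrne : r ≠ 0 := by rintro rfl; exact hAne (by simpa using hr)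
  have hsne : s ≠ 0 := by rintro rfl; exact hBne (by simpa using hs)
  have htne : t ≠ 0 := by rintro rfl; exact hCne (by simpa using ht)
  refine ⟨d, r, s, t, hdne, hrne, hsne, htne, ?_, ?_, ?_, ?_⟩
  · have : k * (r + s + t) = 0 := by
      have : k * r + k * s + k * t = A + B + C := by rw [← hr, ← hs, ← ht]
      have h2 : A + B + C = 0 := by rw [hA, hB, hC]; linarith [e]
      nlinarith [this, h2]
    exact (mul_eq_zero.mp this).resolve_left hkne
  · -- x = d * s * t
    have key : (x * y * z) * (d * s * t) = (x * y * z) * x := by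
      calc (x * y * z) * (d * s * t) = (k * s) * (k * t) := by linear_combination (-(s * t)) * hd
        _ = B * C := by rw [hs, ht]
        _ = (x * y * z) * x := hBC
    exact (mul_left_cancel₀ hxyz key).symm
  · have key : (x * y * z) * (d * r * t) = (x * y * z) * y := by
      calc (x * y * z) * (d * r * t) = (k * r) * (k * t) := by linear_combination (-(r * t)) * hd
        _ = A * C := by rw [hr, ht]
        _ = (x * y * z) * y := hAC
    exact (mul_left_cancel₀ hxyz key).symm
  · have key : (x * y * z) * (d * r * s) = (x * y * z) * z := by
      calc (x * y * z) * (d * r * s) = (k * r) * (k * s) := by linear_combination (-(r * s)) * hd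
        _ = A * B := by rw [hr, hs]
        _ = (x * y * z) * z := hAB
    exact (mul_left_cancel₀ hxyz key).symm
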